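/- The shifted double Schur functions for one-row partitions agree with shifted complete homogeneous functions: $^n s^*_{(p)}(x_1,\dots,x_n|y) = h_p(x_1+y_{-1},\dots,x_n+y_{-n}\,|\,\tau^{n+1}y)$ for all $p \geq 0$. -/

import Mathlib

open Finset

/-- Generalized factorial power `(x|y)^p = ∏_{j=1}^p (x - y_j)`
for a doubly infinite sequence `y`. -/
def gfp {R : Type*} [CommRing R] (y : ℤ → R) (x : R) (p : ℕ) : R :=
  ∏ j ∈ Finset.range p, (x - y ((j : ℤ) + 1))

/-- Numerator determinant `det [(x_i|y)^{λ_j + n - j}]` (indices `i j : Fin n`, zero-based,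
so the 1-based exponent `λ_j + n - j` becomes `λ_j + n - (j+1)`). -/
def dnum {R : Type*} [CommRing R] (n : ℕ) (x : Fin n → R) (y : ℤ → R) (l : Fin n → ℕ) : R :=
  Matrix.det (Matrix.of fun i j : Fin n => gfp y (x i) (l j + n - ((j : ℕ) + 1)))

/-- Denominator determinant `det [(x_i|y)^{n-j}]`. -/
def dden {R : Type*} [CommRing R] (n : ℕ) (x : Fin n → R) (y : ℤ → R) : R :=
  dnum n x y fun _ => 0

/-- The double complete homogeneous function
`h_p(x_1,…,x_m|y) = ∑_{1 ≤ i_1 ≤ … ≤ i_p ≤ m} ∏_{j=1}^p (x_{i_j} - y_{i_j + j - 1})`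
(zero-based indexing of the variables and of `j`). -/
def dh {R : Type*} [CommRing R] (m p : ℕ) (x : Fin m → R) (y : ℤ → R) : R :=
  ∑ f ∈ Finset.univ.filter (fun f : Fin p → Fin m => ∀ a b : Fin p, a ≤ b → f a ≤ f b),
    ∏ j : Fin p, (x (f j) - y (((f j : ℕ) : ℤ) + ((j : ℕ) : ℤ) + 1))

/-- `h_p` extended to integer `p`, with `h_p = 0` for `p < 0`. -/
def dhZ {R : Type*} [CommRing R] (m : ℕ) (p : ℤ) (x : Fin m → R) (y : ℤ → R) : R :=
  if 0 ≤ p then dh m p.toNat x y else 0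

section AuxiliaryLemmas

variable {R : Type*} [CommRing R]

def onerow (n p : ℕ) : Fin n → ℕ := fun j => if (j : ℕ) = 0 then p else 0

lemma gfp_succ {R : Type*} [CommRing R] (w : ℤ → R) (x : R) (p : ℕ) :
    gfp w x (p + 1) = gfp w x p * (x - w ((p : ℤ) + 1)) := by
  simp [gfp, Finset.prod_range_succ]

lemma gfp_sub (w : ℤ → R) (x u : R) (m : ℕ) :
    gfp w x m - gfp w u m =
      (x - u) * ∑ k ∈ Finset.range m, gfp w x k *
        ∏ s ∈ Finset.range (m - 1 - k), (u - w ((k : ℤ) + (s : ℤ) + 2)) := by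
  have tele := Finset.sum_range_sub
    (f := fun k => gfp w x k * (∏ s ∈ Finset.range (m - k), (u - w ((k:ℤ) + (s : ℤ) + 1)))) m
  have key : ∀ k ∈ Finset.range m,
      gfp w x (k+1) * (∏ s ∈ Finset.range (m - (k+1)), (u - w (((k+1 : ℕ):ℤ) + (s : ℤ) + 1)))
        - gfp w x k * (∏ s ∈ Finset.range (m - k), (u - w ((k:ℤ) + (s : ℤ) + 1)))
      = (x - u) * (gfp w x k *
        ∏ s ∈ Finset.range (m - 1 - k), (u - w ((k : ℤ) + (s : ℤ) + 2))) := by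
    intro k hk
    rw [Finset.mem_range] at hk
    have h1 : m - k = (m - 1 - k) + 1 := by omega
    have h2 : m - (k+1) = m - 1 - k := by omega
    rw [h1, h2, Finset.prod_range_succ', gfp_succ]
    have hA : (∏ s ∈ Finset.range (m-1-k), (u - w (((k+1:ℕ):ℤ) + (s:ℤ) + 1)))
        = ∏ s ∈ Finset.range (m-1-k), (u - w ((k:ℤ) + (s:ℤ) + 2)) := by
      refine Finset.prod_congr rfl fun s _ => ?_
      have h : ((k+1:ℕ):ℤ) + (s:ℤ) + 1 = (k:ℤ) + (s:ℤ) + 2 := by omega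
      rw [h]
    have hB : (∏ s ∈ Finset.range (m-1-k), (u - w ((k:ℤ) + ((s+1 : ℕ):ℤ) + 1)))
        = ∏ s ∈ Finset.range (m-1-k), (u - w ((k:ℤ) + (s:ℤ) + 2)) := by
      refine Finset.prod_congr rfl fun s _ => ?_
      have h : (k:ℤ) + ((s+1:ℕ):ℤ) + 1 = (k:ℤ) + (s:ℤ) + 2 := by omega
      rw [h]
    have hf0 : ((k:ℤ) + ((0:ℕ):ℤ) + 1) = (k:ℤ) + 1 := by omega
    rw [hA, hB, hf0]
    ring
  rw [Finset.sum_congr rfl key] at tele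
  rw [← Finset.mul_sum] at tele
  rw [tele]
  have hm : m - m = 0 := by omega
  rw [hm]
  simp only [Finset.range_zero, Finset.prod_empty, mul_one, Nat.sub_zero]
  have h0 : gfp w x 0 = 1 := by simp [gfp]
  have hu : (∏ s ∈ Finset.range m, (u - w (((0:ℕ):ℤ) + (s:ℤ) + 1))) = gfp w u m := by
    refine Finset.prod_congr rfl fun s _ => ?_
    have h : ((0:ℕ):ℤ) + (s:ℤ) + 1 = (s:ℤ) + 1 := by omega
    rw [h]
  rw [h0, hu, one_mul]

lemma dh_zero (m : ℕ) (z : Fin m → R) (w : ℤ → R) : dh m 0 z w = 1 := by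
  rw [dh]
  rw [Finset.filter_true_of_mem (fun f _ => fun a b _ => (a.elim0 : f a ≤ f b))]
  simp

lemma dh_one (p : ℕ) (z : Fin 1 → R) (w : ℤ → R) : dh 1 p z w = gfp w (z 0) p := by
  rw [dh]
  rw [Finset.filter_true_of_mem (fun f _ => fun a b _ => by
    have h1 : f a = 0 := Subsingleton.elim _ _
    have h2 : f b = 0 := Subsingleton.elim _ _
    rw [h1, h2])]
  rw [Finset.sum_eq_single (fun _ => (0 : Fin 1))]
  · rw [gfp, ← Fin.prod_univ_eq_prod_range (f := fun j => (z 0 - w ((j:ℤ) + 1)))]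
    refine Finset.prod_congr rfl fun j _ => ?_
    simp
  · intro f _ hf
    exact absurd (funext fun j => Subsingleton.elim _ _) hf
  · intro h
    exact absurd (Finset.mem_univ _) h

lemma dh_split (n p : ℕ) (z : Fin (n + 1) → R) (w : ℤ → R) :
    dh (n + 1) (p + 1) z w =
      dh n (p + 1) (z ∘ Fin.castSucc) w +
        (z (Fin.last n) - w ((n : ℤ) + (p : ℤ) + 1)) * dh (n + 1) p z w := by
  classical
  rw [dh]
  rw [← Finset.sum_filter_add_sum_filter_not
    (Finset.univ.filter (fun f : Fin (p+1) → Fin (n+1) => ∀ a b, a ≤ b → f a ≤ f b))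
    (fun f => f (Fin.last p) ≠ Fin.last n)]
  congr 1
  · -- f (last p) ≠ last n
    rw [dh]
    refine Finset.sum_bij'
      (i := fun f hf => fun a : Fin (p+1) =>
        (f a).castPred (by
          simp only [Finset.mem_filter, Finset.mem_univ, true_and] at hf
          intro hc
          exact hf.2 (le_antisymm (Fin.le_last _)
            (hc ▸ hf.1 a (Fin.last p) (Fin.le_last a)))))
      (j := fun g _ => fun a => (g a).castSucc) ?_ ?_ ?_ ?_ ?_
    · intro f hf
      simp only [Finset.mem_filter, Finset.mem_univ, true_and] at hf ⊢
      intro a b hab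
      have := hf.1 a b hab
      rwa [← Fin.castSucc_le_castSucc_iff, Fin.castSucc_castPred, Fin.castSucc_castPred]
    · intro g hg
      simp only [Finset.mem_filter, Finset.mem_univ, true_and] at hg ⊢
      refine ⟨fun a b hab => ?_, ?_⟩
      · rw [Fin.castSucc_le_castSucc_iff]; exact hg a b hab
      · exact Fin.ne_last_of_lt (Fin.castSucc_lt_last _)
    · intro f hf; funext a; exact Fin.castSucc_castPred _ _
    · intro g hg; funext a; exact Fin.castPred_castSucc _
    · intro f hf
      refine Finset.prod_congr rfl fun a _ => ?_
      simp [Fin.castSucc_castPred, Fin.coe_castPred]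
  · -- f (last p) = last n
    have step1 : ∀ f ∈ (Finset.univ.filter
        (fun f : Fin (p+1) → Fin (n+1) => ∀ a b, a ≤ b → f a ≤ f b)).filter
        (fun f => ¬ f (Fin.last p) ≠ Fin.last n),
        (∏ j : Fin (p+1), (z (f j) - w (((f j : ℕ) : ℤ) + ((j : ℕ) : ℤ) + 1)))
        = (∏ j : Fin p, (z (f j.castSucc) -
            w (((f j.castSucc : ℕ) : ℤ) + ((j : ℕ) : ℤ) + 1))) *
          (z (Fin.last n) - w ((n : ℤ) + (p : ℤ) + 1)) := by
      intro f hf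
      simp only [Finset.mem_filter, Finset.mem_univ, true_and, not_not] at hf
      rw [Fin.prod_univ_castSucc, hf.2]
      rfl
    rw [Finset.sum_congr rfl step1]
    rw [← Finset.sum_mul, mul_comm]
    congr 1
    rw [dh]
    refine Finset.sum_bij'
      (i := fun f _ => fun a : Fin p => f a.castSucc)
      (j := fun g _ => Fin.snoc g (Fin.last n)) ?_ ?_ ?_ ?_ ?_
    · intro f hf
      simp only [Finset.mem_filter, Finset.mem_univ, true_and, not_not] at hf ⊢
      intro a b hab
      exact hf.1 _ _ (by rwa [Fin.castSucc_le_castSucc_iff])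
    · intro g hg
      simp only [Finset.mem_filter, Finset.mem_univ, true_and, not_not] at hg ⊢
      refine ⟨fun a b hab => ?_, by simp [Fin.snoc_last]⟩
      rcases Fin.eq_castSucc_or_eq_last b with ⟨b', rfl⟩ | rfl
      · rcases Fin.eq_castSucc_or_eq_last a with ⟨a', rfl⟩ | rfl
        · simp only [Fin.snoc_castSucc]
          exact hg a' b' (by rwa [Fin.castSucc_le_castSucc_iff] at hab)
        · exact absurd (lt_of_le_of_lt hab (Fin.castSucc_lt_last b')) (lt_irrefl _)
      · simp only [Fin.snoc_last]
        exact Fin.le_last _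
    · intro f hf
      simp only [Finset.mem_filter, Finset.mem_univ, true_and, not_not] at hf
      funext a
      rcases Fin.eq_castSucc_or_eq_last a with ⟨a', rfl⟩ | rfl
      · simp only [Fin.snoc_castSucc]
      · simp only [Fin.snoc_last, hf.2]
    · intro g hg; funext a; simp only [Fin.snoc_castSucc]
    · intro f hf; rfl

lemma dh_unroll (n p : ℕ) (z : Fin (n + 1) → R) (w : ℤ → R) :
    dh (n + 1) p z w =
      ∑ q ∈ Finset.range (p + 1),
        (∏ s ∈ Finset.range (p - q), (z (Fin.last n) - w ((n : ℤ) + (q : ℤ) + (s : ℤ) + 1))) *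
          dh n q (z ∘ Fin.castSucc) w := by
  induction p with
  | zero => simp [dh_zero]
  | succ p ih =>
    rw [dh_split n p z w, ih]
    rw [Finset.sum_range_succ (f := fun q =>
      (∏ s ∈ Finset.range (p + 1 - q), (z (Fin.last n) - w ((n : ℤ) + (q : ℤ) + (s : ℤ) + 1))) *
        dh n q (z ∘ Fin.castSucc) w)]
    have htop : (p : ℕ) + 1 - (p + 1) = 0 := by omega
    rw [htop]
    simp only [Finset.range_zero, Finset.prod_empty, one_mul]
    rw [add_comm (dh n (p+1) (z ∘ Fin.castSucc) w)]
    congr 1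
    rw [Finset.mul_sum]
    refine Finset.sum_congr rfl fun q hq => ?_
    rw [Finset.mem_range] at hq
    have h1 : p + 1 - q = (p - q) + 1 := by omega
    rw [h1, Finset.prod_range_succ]
    have h2 : (n : ℤ) + (q : ℤ) + ((p - q : ℕ) : ℤ) + 1 = (n : ℤ) + (p : ℤ) + 1 := by omega
    rw [h2]
    ring

lemma det_updateColumn_sum {m : ℕ} (M : Matrix (Fin m) (Fin m) R) (j : Fin m)
    (S : Finset ℕ) (c : ℕ → R) (v : ℕ → Fin m → R) :
    Matrix.det (M.updateCol j (fun i => ∑ k ∈ S, c k * v k i)) =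
      ∑ k ∈ S, c k * Matrix.det (M.updateCol j (v k)) := by
  classical
  induction S using Finset.induction_on with
  | empty =>
    simp only [Finset.sum_empty]
    exact Matrix.det_eq_zero_of_column_eq_zero j (fun i => by
      simp [Matrix.updateCol_self])
  | @insert a S ha ih =>
    rw [Finset.sum_insert ha]
    have : (fun i => ∑ k ∈ insert a S, c k * v k i)
        = (c a • v a) + (fun i => ∑ k ∈ S, c k * v k i) := by
      funext i; simp [Finset.sum_insert ha]
    rw [this, Matrix.det_updateCol_add, Matrix.det_updateCol_smul, ih]

open Fin.NatCast in
lemma pipe (n p : ℕ) (z : Fin (n + 2) → R) (w : ℤ → R) :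
    dnum (n + 2) z w (onerow (n + 2) p) =
      (∏ i : Fin (n + 1), (z i.castSucc - z (Fin.last (n + 1)))) *
        ∑ q ∈ Finset.range (p + 1),
          (∏ s ∈ Finset.range (p - q),
            (z (Fin.last (n + 1)) - w ((n : ℤ) + (q : ℤ) + (s : ℤ) + 2))) *
            dnum (n + 1) (z ∘ Fin.castSucc) w (onerow (n + 1) q) := by
  classical
  have hL : ∀ i : Fin (n+1), Fin.castSucc i ≠ Fin.last (n+1) :=
    fun i => Fin.ne_of_lt (Fin.castSucc_lt_last i)
  set E : Fin (n + 2) → ℕ := fun j => onerow (n + 2) p j + (n + 2) - ((j : ℕ) + 1) with hE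
  have hE0 : E 0 = p + n + 1 := by simp [hE, onerow]; omega
  have hEne : ∀ j : Fin (n + 2), (j : ℕ) ≠ 0 → E j = n + 1 - (j : ℕ) := by
    intro j hj; simp only [hE, onerow, if_neg hj]; omega
  have hEL : E (Fin.last (n+1)) = 0 := by
    rw [hEne _ (by simp [Fin.val_last])]; simp [Fin.val_last]
  set A : Matrix (Fin (n+2)) (Fin (n+2)) R := Matrix.of fun i j => gfp w (z i) (E j) with hA
  have goalA : dnum (n + 2) z w (onerow (n + 2) p) = A.det := rfl
  -- Step 1: subtract last row
  set B : Matrix (Fin (n+2)) (Fin (n+2)) R :=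
    Matrix.of fun i j =>
      if i = Fin.last (n+1) then A i j else A i j - A (Fin.last (n+1)) j with hB
  have hBA : B.det = A.det := by
    refine Matrix.det_eq_of_forall_row_eq_smul_add_const
      (fun i => if i = Fin.last (n+1) then 0 else -1) (Fin.last (n+1)) (by simp)
      (fun i j => ?_)
    by_cases h : i = Fin.last (n+1) <;> simp [hB, h] <;> ring
  -- Step 2: factor rows
  set Qc : Fin (n+2) → R → R := fun j x =>
    ∑ k ∈ Finset.range (E j), gfp w x k *
      ∏ s ∈ Finset.range (E j - 1 - k), (z (Fin.last (n+1)) - w ((k : ℤ) + (s : ℤ) + 2))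
    with hQc
  set C : Matrix (Fin (n+2)) (Fin (n+2)) R :=
    Matrix.of fun i j => if i = Fin.last (n+1) then A (Fin.last (n+1)) j else Qc j (z i) with hC
  have hBC : B = Matrix.of (fun i j =>
      (if i = Fin.last (n+1) then 1 else (z i - z (Fin.last (n+1)))) * C i j) := by
    ext i j
    by_cases h : i = Fin.last (n+1)
    · simp [hB, hC, h]
    · simp only [hB, hC, Matrix.of_apply, if_neg h, one_mul]
      exact gfp_sub w (z i) (z (Fin.last (n+1))) (E j)
  have hdetB : B.det = (∏ i : Fin (n+1), (z i.castSucc - z (Fin.last (n+1)))) * C.det := by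
    rw [hBC, Matrix.det_mul_column]
    congr 1
    rw [Fin.prod_univ_castSucc, if_pos rfl, mul_one]
    exact Finset.prod_congr rfl fun i _ => if_neg (hL i)
  -- Step 3: expand along last column
  set D : Matrix (Fin (n+1)) (Fin (n+1)) R := C.submatrix Fin.castSucc Fin.castSucc with hD
  have hCD : C.det = D.det := by
    rw [Matrix.det_succ_column C (Fin.last (n+1))]
    rw [Finset.sum_eq_single (Fin.last (n+1))]
    · have h1 : C (Fin.last (n+1)) (Fin.last (n+1)) = 1 := by
        simp only [hC, Matrix.of_apply, if_pos rfl, hA]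
        rw [hEL]; simp [gfp]
      have h2 : ((-1 : R)) ^ (((Fin.last (n+1) : Fin (n+2)) : ℕ) +
          ((Fin.last (n+1) : Fin (n+2)) : ℕ)) = 1 :=
        Even.neg_one_pow ⟨((Fin.last (n+1) : Fin (n+2)) : ℕ), rfl⟩
      rw [h1, h2]
      simp only [one_mul, mul_one]
      rw [hD, Fin.succAbove_last]
    · intro i _ hi
      have : C i (Fin.last (n+1)) = 0 := by
        simp only [hC, Matrix.of_apply, if_neg hi, hQc]
        rw [hEL]; simp
      rw [this]; ring
    · intro h; exact absurd (Finset.mem_univ _) h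
  -- Step 4: triangular transition
  set M' : Matrix (Fin (n+1)) (Fin (n+1)) R := Matrix.of fun i j =>
    if (j : ℕ) = 0 then Qc 0 (z i.castSucc)
    else gfp w (z i.castSucc) (n + 1 - ((j : ℕ) + 1)) with hM'
  set T : Matrix (Fin (n+1)) (Fin (n+1)) R := Matrix.of fun k j =>
    if (j : ℕ) = 0 then (if (k : ℕ) = 0 then 1 else 0)
    else if (j : ℕ) ≤ (k : ℕ) then
      ∏ s ∈ Finset.range ((k : ℕ) - (j : ℕ)),
        (z (Fin.last (n+1)) - w ((((n : ℕ) - (k : ℕ) : ℕ) : ℤ) + (s : ℤ) + 2))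
    else 0 with hT
  have hDMT : D = M' * T := by
    ext i j
    rw [Matrix.mul_apply]
    by_cases hj : (j : ℕ) = 0
    · have hj' : j = 0 := Fin.ext hj
      subst hj'
      rw [Finset.sum_eq_single 0]
      · have hcs0 : (Fin.castSucc (0 : Fin (n+1))) = (0 : Fin (n+2)) := rfl
        simp [hT, hM', hD, hC, hcs0, if_neg (hL i)]
      · intro k _ hk
        have hkne : (k : ℕ) ≠ 0 := fun h => hk (Fin.ext h)
        simp [hT, hkne, hk]
      · intro h; exact absurd (Finset.mem_univ _) h
    · -- j ≠ 0
      have hjle : (j : ℕ) ≤ n := Fin.is_le j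
      have hEcs : E (Fin.castSucc j) = n + 1 - (j : ℕ) := hEne _ hj
      have lhs : D i j = ∑ t ∈ Finset.range (n + 1 - (j : ℕ)),
          gfp w (z i.castSucc) t *
            ∏ s ∈ Finset.range (n + 1 - (j : ℕ) - 1 - t),
              (z (Fin.last (n+1)) - w ((t : ℤ) + (s : ℤ) + 2)) := by
        simp only [hD, Matrix.submatrix_apply, hC, Matrix.of_apply, if_neg (hL i), hQc, hEcs]
      rw [lhs]
      have hvan : ∀ k : Fin (n+1), k ∈ Finset.univ →
          k ∉ Finset.univ.filter (fun k : Fin (n+1) => (j : ℕ) ≤ (k : ℕ)) →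
          M' i k * T k j = 0 := by
        intro k _ hk
        simp only [Finset.mem_filter, Finset.mem_univ, true_and, not_le] at hk
        have : T k j = 0 := by
          simp only [hT, Matrix.of_apply, if_neg hj]
          rw [if_neg (by omega)]
        rw [this, mul_zero]
      rw [← Finset.sum_subset (Finset.filter_subset _ Finset.univ) hvan]
      refine Finset.sum_nbij' (i := fun t => ((n - t : ℕ) : Fin (n+1)))
        (j := fun k => n - (k : ℕ)) ?_ ?_ ?_ ?_ ?_
      · intro t ht
        rw [Finset.mem_range] at ht
        simp only [Finset.mem_filter, Finset.mem_univ, true_and, Fin.val_natCast]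
        rw [Nat.mod_eq_of_lt (by omega : n - t < n + 1)]
        omega
      · intro k hk
        simp only [Finset.mem_filter, Finset.mem_univ, true_and] at hk
        have := Fin.is_le k
        show n - (k : ℕ) ∈ Finset.range (n + 1 - (j : ℕ))
        rw [Finset.mem_range]
        omega
      · intro t ht
        rw [Finset.mem_range] at ht
        simp only [Fin.val_natCast]
        rw [Nat.mod_eq_of_lt (by omega : n - t < n + 1)]
        omega
      · intro k hk
        simp only [Finset.mem_filter, Finset.mem_univ, true_and] at hk
        have := Fin.is_le k
        show (((n - (n - (k : ℕ)) : ℕ)) : Fin (n+1)) = k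
        refine Fin.ext ?_
        simp only [Fin.val_natCast]
        rw [Nat.mod_eq_of_lt (by omega : n - (n - (k:ℕ)) < n + 1)]
        omega
      · intro t ht
        rw [Finset.mem_range] at ht
        have h1 : (((n - t : ℕ) : Fin (n+1)) : ℕ) = n - t := by
          rw [Fin.val_natCast]; exact Nat.mod_eq_of_lt (by omega)
        have hnt : (n - t) ≠ 0 := by omega
        simp only [hM', hT, Matrix.of_apply, h1, if_neg hnt, if_neg hj,
          if_pos (by omega : (j:ℕ) ≤ n - t)]
        have e1 : n + 1 - (n - t + 1) = t := by omega
        have e2 : n - t - (j : ℕ) = n + 1 - (j : ℕ) - 1 - t := by omega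
        have e3 : n - (n - t) = t := by omega
        rw [e1, e2, e3]
  have hdetT : T.det = 1 := by
    have htri : T.BlockTriangular OrderDual.toDual := by
      intro a b hab
      have hab' : (a : ℕ) < (b : ℕ) := hab
      have hbne : (b : ℕ) ≠ 0 := by omega
      simp only [hT, Matrix.of_apply, if_neg hbne]
      rw [if_neg (by omega)]
    rw [Matrix.det_of_lowerTriangular T htri]
    refine Finset.prod_eq_one fun i _ => ?_
    by_cases hi : (i : ℕ) = 0
    · simp [hT, hi, (Fin.ext hi : i = 0)]
    · simp only [hT, Matrix.of_apply, if_neg hi, if_pos (le_refl _)]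
      simp
  have hdetD : D.det = M'.det := by
    rw [hDMT, Matrix.det_mul, hdetT, mul_one]
  -- Step 5: expand first column
  have hcol : (fun i : Fin (n+1) => M' i 0) = fun i =>
      ∑ k ∈ Finset.range (p + n + 1),
        (∏ s ∈ Finset.range (p + n - k), (z (Fin.last (n+1)) - w ((k : ℤ) + (s : ℤ) + 2))) *
          gfp w (z i.castSucc) k := by
    funext i
    simp only [hM', Matrix.of_apply, Fin.val_zero, if_pos rfl, hQc, hE0]
    refine Finset.sum_congr rfl fun k hk => ?_
    have : p + n + 1 - 1 - k = p + n - k := by omega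
    rw [this, mul_comm]
  have hM'det : M'.det = ∑ k ∈ Finset.range (p + n + 1),
      (∏ s ∈ Finset.range (p + n - k), (z (Fin.last (n+1)) - w ((k : ℤ) + (s : ℤ) + 2))) *
        Matrix.det (M'.updateCol 0 (fun i => gfp w (z i.castSucc) k)) := by
    conv_lhs => rw [← Matrix.updateCol_eq_self M' 0, hcol]
    exact det_updateColumn_sum M' 0 (Finset.range (p+n+1)) _ (fun k i => gfp w (z i.castSucc) k)
  have hzero : ∀ k ∈ Finset.range n,
      Matrix.det (M'.updateCol 0 (fun i => gfp w (z i.castSucc) k)) = 0 := by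
    intro k hk
    rw [Finset.mem_range] at hk
    refine Matrix.det_zero_of_column_eq (i := (0 : Fin (n+1)))
      (j := (⟨n - k, by omega⟩ : Fin (n+1))) (by
        intro h
        have := congrArg Fin.val h
        simp only [Fin.val_zero] at this
        omega) (fun r => ?_)
    rw [Matrix.updateCol_self, Matrix.updateCol_ne (by
      intro h
      have := congrArg Fin.val h
      simp only [Fin.val_zero] at this
      omega)]
    have h1 : ((⟨n - k, by omega⟩ : Fin (n+1)) : ℕ) = n - k := rfl
    have h2 : (n - k : ℕ) ≠ 0 := by omega
    simp only [hM', Matrix.of_apply, h1, if_neg h2]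
    congr 1
    omega
  have hdnum : ∀ q : ℕ,
      Matrix.det (M'.updateCol 0 (fun i => gfp w (z i.castSucc) (n + q))) =
        dnum (n + 1) (z ∘ Fin.castSucc) w (onerow (n + 1) q) := by
    intro q
    rw [dnum]
    congr 1
    ext i j
    by_cases hj : (j : ℕ) = 0
    · have hj' : j = 0 := Fin.ext hj
      subst hj'
      rw [Matrix.updateCol_self]
      show gfp w (z i.castSucc) (n + q) =
        gfp w ((z ∘ Fin.castSucc) i) (onerow (n+1) q 0 + (n + 1) - (0 + 1))
      have : onerow (n+1) q 0 + (n + 1) - (0 + 1) = n + q := by simp [onerow]; omega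
      rw [this]
      rfl
    · rw [Matrix.updateCol_ne (fun h => hj (by rw [h]; rfl))]
      show M' i j = gfp w ((z ∘ Fin.castSucc) i) (onerow (n+1) q j + (n + 1) - ((j:ℕ) + 1))
      have : onerow (n+1) q j + (n + 1) - ((j:ℕ) + 1) = n + 1 - ((j:ℕ)+1) := by
        simp [onerow, hj]
      rw [this, hM']
      have hj0 : j ≠ 0 := fun h => hj (by rw [h]; rfl)
      simp [hj, hj0]
  -- assemble
  rw [goalA, ← hBA, hdetB, hCD, hdetD, hM'det]
  congr 1
  have hsplit : p + n + 1 = n + (p + 1) := by omega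
  rw [hsplit, Finset.sum_range_add]
  rw [Finset.sum_congr rfl (fun k hk => by rw [hzero k hk, mul_zero]), Finset.sum_const,
    smul_zero, zero_add]
  refine Finset.sum_congr rfl fun q hq => ?_
  rw [Finset.mem_range] at hq
  rw [hdnum q]
  congr 1
  have e1 : p + n - (n + q) = p - q := by omega
  rw [e1]
  refine Finset.prod_congr rfl fun s _ => ?_
  have e2 : (((n + q : ℕ)) : ℤ) + (s : ℤ) + 2 = (n : ℤ) + (q : ℤ) + (s : ℤ) + 2 := by
    push_cast; ring
  rw [e2]

lemma dden_eq (m : ℕ) (z : Fin m → R) (w : ℤ → R) :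
    dden m z w = dnum m z w (onerow m 0) := by
  rw [dden]
  congr 1
  funext j
  simp [onerow]

lemma main_lemma (n : ℕ) (p : ℕ) (z : Fin (n + 1) → R) (w : ℤ → R) :
    dnum (n + 1) z w (onerow (n + 1) p) = dh (n + 1) p z w * dden (n + 1) z w := by
  induction n generalizing p with
  | zero =>
    rw [dnum, Matrix.det_fin_one, dh_one, dden, dnum, Matrix.det_fin_one]
    simp only [Matrix.of_apply]
    have h1 : onerow 1 p 0 + 1 - (((0 : Fin 1) : ℕ) + 1) = p := by simp [onerow]
    have h2 : (fun _ : Fin 1 => 0) 0 + 1 - (((0 : Fin 1) : ℕ) + 1) = 0 := by simp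
    rw [h1, h2]
    simp [gfp]
  | succ n ih =>
    rw [pipe n p z w]
    have hDD : dden (n + 2) z w =
        (∏ i : Fin (n + 1), (z i.castSucc - z (Fin.last (n + 1)))) *
          dden (n + 1) (z ∘ Fin.castSucc) w := by
      rw [dden_eq, pipe n 0 z w, dden_eq]
      simp
    have hunroll : dh (n + 2) p z w =
        ∑ q ∈ Finset.range (p + 1),
          (∏ s ∈ Finset.range (p - q),
            (z (Fin.last (n + 1)) - w ((n : ℤ) + (q : ℤ) + (s : ℤ) + 2))) *
            dh (n + 1) q (z ∘ Fin.castSucc) w := by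
      rw [dh_unroll (n + 1) p z w]
      refine Finset.sum_congr rfl fun q hq => ?_
      congr 1
      refine Finset.prod_congr rfl fun s _ => ?_
      have : (((n + 1 : ℕ)) : ℤ) + (q : ℤ) + (s : ℤ) + 1
          = (n : ℤ) + (q : ℤ) + (s : ℤ) + 2 := by push_cast; ring
      rw [this]
    rw [hunroll, hDD, Finset.sum_mul, Finset.mul_sum]
    refine Finset.sum_congr rfl fun q hq => ?_
    rw [ih q (z ∘ Fin.castSucc)]
    ring

end AuxiliaryLemmas

/-- for one-row partitions `λ = (p)`, the shifted double Schur function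
equals the shifted complete homogeneous function:
`^n s*_{(p)}(x_1,…,x_n|y) = h_p(x_1+y_{-1},…,x_n+y_{-n} | τ^{n+1} y)` for all `p ≥ 0`
(written multiplicatively; `(τ^{n+1} y)_k = y_{k-n-1}`). -/
theorem sstar_one_row_eq_dh {R : Type*} [CommRing R] (n : ℕ) (hn : 0 < n) (p : ℕ)
    (x : Fin n → R) (y : ℤ → R) :
    dnum n (fun i => x i + y (-((i : ℤ) + 1))) (fun k => y (k - (n + 1)))
        (fun j => if (j : ℕ) = 0 then p else 0) =
      dh n p (fun i => x i + y (-((i : ℤ) + 1))) (fun k => y (k - (n + 1))) *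
        dden n (fun i => x i + y (-((i : ℤ) + 1))) (fun k => y (k - (n + 1))) := by
  obtain ⟨m, rfl⟩ : ∃ m, n = m + 1 := ⟨n - 1, by omega⟩
  have h := main_lemma m p (fun i => x i + y (-((i : ℤ) + 1)))
    (fun k => y (k - (m + 1 + 1)))
  have honerow : (fun j : Fin (m+1) => if (j : ℕ) = 0 then p else 0) = onerow (m+1) p := rfl
  rw [honerow]
  convert h using 3 <;> norm_num
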